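/- Let M ⊆ ℚ^n be a monoid, V₁, ..., V_k ⊆ ℚ^n be vector subspaces, and a₁, ..., a_k ∈ ℚ^n. If M ⊆ ⋃_{j=1}^k (a_j + V_j), then there exists an index j such that a_j ∈ V_j and M ⊆ a_j + V_j (hence M ⊆ V_j). -/

import Mathlib

open scoped Pointwise

/-- A monoid of ℚ^n: a set containing 0 and closed under addition. -/
def IsMonoidSet {n : ℕ} (M : Set (Fin n → ℚ)) : Prop :=
  (0 : Fin n → ℚ) ∈ M ∧ ∀ x ∈ M, ∀ y ∈ M, x + y ∈ M

lemma nsmul_mem_of_isMonoidSet {n : ℕ} {M : Set (Fin n → ℚ)} (hM : IsMonoidSet M)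
    {x : Fin n → ℚ} (hx : x ∈ M) : ∀ m : ℕ, m • x ∈ M := by
  intro m
  induction m with
  | zero => simpa using hM.1
  | succ m ih =>
    rw [succ_nsmul]
    exact hM.2 _ ih _ hx

lemma mem_of_nsmul_mem {n : ℕ} {V : Submodule ℚ (Fin n → ℚ)} {x : Fin n → ℚ} {m : ℕ}
    (hm : m ≠ 0) (h : m • x ∈ V) : x ∈ V := by
  have hq : (m : ℚ) ≠ 0 := Nat.cast_ne_zero.mpr hm
  have : ((m : ℚ))⁻¹ • ((m : ℚ) • x) ∈ V := V.smul_mem _ (by rw [Nat.cast_smul_eq_nsmul]; exact h)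
  rwa [smul_smul, inv_mul_cancel₀ hq, one_smul] at this

lemma two_multiples_mem {n : ℕ} {V : Submodule ℚ (Fin n → ℚ)} {x y : Fin n → ℚ} {m m' : ℕ}
    (hlt : m < m') (h1 : y + m • x ∈ V) (h2 : y + m' • x ∈ V) : x ∈ V ∧ y ∈ V := by
  have hsub : (m' - m) • x ∈ V := by
    have h3 : (y + m' • x) - (y + m • x) ∈ V := V.sub_mem h2 h1
    have heq : (y + m' • x) - (y + m • x) = (m' - m) • x := by
      rw [sub_nsmul _ hlt.le]
      abel
    rwa [heq] at h3
  have hx : x ∈ V := mem_of_nsmul_mem (Nat.sub_ne_zero_of_lt hlt) hsub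
  refine ⟨hx, ?_⟩
  have h4 : (y + m • x) - m • x ∈ V := V.sub_mem h1 (nsmul_mem hx m)
  simpa using h4

/-- A monoid covered by finitely many subspaces lies in one of them. -/
lemma monoid_subset_of_subset_iUnion {n : ℕ} {ι : Type*} [DecidableEq ι]
    {M : Set (Fin n → ℚ)} (hM : IsMonoidSet M)
    (s : Finset ι) (V : ι → Submodule ℚ (Fin n → ℚ))
    (h : M ⊆ ⋃ j ∈ s, (V j : Set (Fin n → ℚ))) : ∃ j ∈ s, M ⊆ (V j : Set (Fin n → ℚ)) := by
  classical
  induction s using Finset.induction_on with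
  | empty =>
    exfalso
    simpa using h hM.1
  | @insert i s hi ih =>
    by_cases hcase : M ⊆ ⋃ j ∈ s, (V j : Set (Fin n → ℚ))
    · obtain ⟨j, hjs, hj⟩ := ih hcase
      exact ⟨j, Finset.mem_insert_of_mem hjs, hj⟩
    · obtain ⟨x, hxM, hx⟩ := Set.not_subset.mp hcase
      have hxnot : ∀ j ∈ s, x ∉ V j := by
        intro j hj hxj
        exact hx (Set.mem_biUnion hj hxj)
      refine ⟨i, Finset.mem_insert_self i s, ?_⟩
      intro y hyM
      have hmem : ∀ m : ℕ, ∃ j, j ∈ insert i s ∧ y + m • x ∈ V j := by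
        intro m
        have hm : y + m • x ∈ M := hM.2 _ hyM _ (nsmul_mem_of_isMonoidSet hM hxM m)
        have := h hm
        simpa using this
      choose f hf hf' using hmem
      have hcard : (insert i s).card < (Finset.range ((insert i s).card + 1)).card := by
        simp
      obtain ⟨m, _, m', _, hmm', hfeq⟩ :=
        Finset.exists_ne_map_eq_of_card_lt_of_maps_to hcard (fun m _ => hf m)
      have key : x ∈ V (f m) ∧ y ∈ V (f m) := by
        rcases Ne.lt_or_gt hmm' with hlt | hlt
        · exact two_multiples_mem hlt (hf' m) (hfeq ▸ hf' m')
        · exact two_multiples_mem hlt (hfeq ▸ hf' m') (hf' m)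
      have : f m = i := by
        rcases Finset.mem_insert.mp (hf m) with h' | h'
        · exact h'
        · exact absurd key.1 (hxnot _ h')
      exact this ▸ key.2

theorem stmt4 {n k : ℕ} (M : Set (Fin n → ℚ)) (hM : IsMonoidSet M)
    (V : Fin k → Submodule ℚ (Fin n → ℚ)) (a : Fin k → (Fin n → ℚ))
    (h : M ⊆ ⋃ j, (a j +ᵥ (V j : Set (Fin n → ℚ)))) :
    ∃ j, a j ∈ V j ∧ M ⊆ a j +ᵥ (V j : Set (Fin n → ℚ)) := by
  classical
  -- Step 1: M is covered by the subspaces V j for j with a j ∈ V j.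
  set s : Finset (Fin k) := Finset.univ.filter (fun j => a j ∈ V j) with hs
  have hcover : M ⊆ ⋃ j ∈ s, (V j : Set (Fin n → ℚ)) := by
    intro x hxM
    have hmem : ∀ m : ℕ, ∃ j, m • x - a j ∈ V j := by
      intro m
      have hm : m • x ∈ M := nsmul_mem_of_isMonoidSet hM hxM m
      obtain ⟨j, hj⟩ := Set.mem_iUnion.mp (h hm)
      obtain ⟨v, hv, hve⟩ := hj
      exact ⟨j, by rw [← hve]; simpa using hv⟩
    choose f hf using hmem
    have hcard : (Finset.univ : Finset (Fin k)).card < (Finset.range (k + 1)).card := by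
      simp
    obtain ⟨m, _, m', _, hmm', hfeq⟩ :=
      Finset.exists_ne_map_eq_of_card_lt_of_maps_to hcard
        (fun m _ => Finset.mem_univ (f m))
    have key : ∀ {p q : ℕ}, p < q → f p = f q → x ∈ V (f p) ∧ a (f p) ∈ V (f p) := by
      intro p q hpq hpeq
      have h1 := hf p
      have h2 := hf q
      rw [← hpeq] at h2
      have hsub : (q - p) • x ∈ V (f p) := by
        have h3 : (q • x - a (f p)) - (p • x - a (f p)) ∈ V (f p) := (V (f p)).sub_mem h2 h1
        have heq : (q • x - a (f p)) - (p • x - a (f p)) = (q - p) • x := by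
          rw [sub_nsmul _ hpq.le]; abel
        rwa [heq] at h3
      have hx : x ∈ V (f p) := mem_of_nsmul_mem (Nat.sub_ne_zero_of_lt hpq) hsub
      refine ⟨hx, ?_⟩
      have h4 : p • x - (p • x - a (f p)) ∈ V (f p) := (V (f p)).sub_mem (nsmul_mem hx p) h1
      simpa using h4
    have hxa : x ∈ V (f m) ∧ a (f m) ∈ V (f m) := by
      rcases Ne.lt_or_gt hmm' with hlt | hlt
      · exact key hlt hfeq
      · have := key hlt hfeq.symm
        rwa [← hfeq] at this
    exact Set.mem_biUnion (Finset.mem_filter.mpr ⟨Finset.mem_univ _, hxa.2⟩) hxa.1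
  obtain ⟨j, hjs, hj⟩ := monoid_subset_of_subset_iUnion hM s V hcover
  have haj : a j ∈ V j := by simpa [hs] using hjs
  refine ⟨j, haj, ?_⟩
  intro x hxM
  exact ⟨x - a j, (V j).sub_mem (hj hxM) haj, by simp⟩
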